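/- Let K be a field, let i₁ < … < i_s be distinct indices in {1,…,n}, let e₁,…,e_s be natural numbers, and let J be a nonzero ideal of R = K[x₁,…,xₙ]. Set I = ⟨x_{i₁}⟩^{e₁}·…·⟨x_{i_s}⟩^{e_s}·J. Then for every point p ∈ Kⁿ with p_{i₁} = … = p_{i_s} = 0 one has ord_p(I) = e₁ + … + e_s + ord_p(J). In particular, if there is an integer o with ord_p(J) ≤ o for all such p and e₁ + … + e_s + o < b, then no point p with p_{i₁} = … = p_{i_s} = 0 lies in the singular locus of (I,b). -/

import Mathlib

/-- The maximal ideal `m_p` of polynomials vanishing at the point `p ∈ Kⁿ`. -/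
noncomputable def vanishingIdeal {K : Type*} [Field K] {n : ℕ} (p : Fin n → K) :
    Ideal (MvPolynomial (Fin n) K) :=
  RingHom.ker (MvPolynomial.eval p)

/-- `ord_p(I)`: the largest `m` with `I ⊆ m_p^m` (for a nonzero ideal `I`). -/
noncomputable def ordIdeal {K : Type*} [Field K] {n : ℕ} (p : Fin n → K)
    (I : Ideal (MvPolynomial (Fin n) K)) : ℕ :=
  sSup {m : ℕ | I ≤ vanishingIdeal p ^ m}

section Aux

open MvPolynomial

variable {K : Type*} [Field K] {n : ℕ}

/-- total degree of an exponent vector -/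
def dsum {n : ℕ} (d : Fin n →₀ ℕ) : ℕ := ∑ i, d i

lemma dsum_add (a b : Fin n →₀ ℕ) : dsum (a + b) = dsum a + dsum b := by
  simp [dsum, Finset.sum_add_distrib]

lemma dsum_single (i : Fin n) (e : ℕ) : dsum (Finsupp.single i e) = e := by
  simp [dsum, Finsupp.single_apply]

lemma dsum_pos {b : Fin n →₀ ℕ} (hb : b ≠ 0) : 1 ≤ dsum b := by
  by_contra h
  push_neg at h
  apply hb
  ext i
  have : dsum b = 0 := by omega
  have := Finset.sum_eq_zero_iff.mp this i (Finset.mem_univ i)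
  simpa using this

lemma mem_vanishing_zero {f : MvPolynomial (Fin n) K} :
    f ∈ vanishingIdeal (0 : Fin n → K) ↔ coeff 0 f = 0 := by
  simp only [_root_.vanishingIdeal, RingHom.mem_ker, MvPolynomial.eval_zero,
    MvPolynomial.constantCoeff_eq, Function.comp_apply]

lemma mem_pow_iff {f : MvPolynomial (Fin n) K} {k : ℕ} :
    f ∈ vanishingIdeal (0 : Fin n → K) ^ k ↔ ∀ d ∈ f.support, k ≤ dsum d := by
  classical
  constructor
  · induction k generalizing f with
    | zero => intro _ d _; exact Nat.zero_le _
    | succ k ih =>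
      intro hf
      rw [pow_succ] at hf
      refine Submodule.mul_induction_on hf ?_ ?_
      · intro x hx y hy d hd
        have hd' := MvPolynomial.support_mul x y hd
        rw [Finset.mem_add] at hd'
        obtain ⟨a, ha, b, hb, rfl⟩ := hd'
        have h1 : k ≤ dsum a := ih hx a ha
        have h2 : 1 ≤ dsum b := by
          apply dsum_pos
          rintro rfl
          have := mem_vanishing_zero.mp hy
          simp [MvPolynomial.mem_support_iff] at hb
          exact hb this
        rw [dsum_add]; omega
      · intro x y hx hy d hd
        rcases Finset.mem_union.mp (MvPolynomial.support_add hd) with h | h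
        · exact hx d h
        · exact hy d h
  · -- first: monomial case
    have mono : ∀ (d : Fin n →₀ ℕ),
        (monomial d (1 : K)) ∈ vanishingIdeal (0 : Fin n → K) ^ (dsum d) := by
      intro d
      induction d using Finsupp.induction with
      | zero => simp [dsum]
      | single_add i b f hif hb ih =>
        have he : (monomial (Finsupp.single i b + f) (1 : K)) =
            X i ^ b * monomial f 1 := by
          rw [X_pow_eq_monomial, monomial_mul, one_mul]
        have hX : (X i : MvPolynomial (Fin n) K) ∈ vanishingIdeal (0 : Fin n → K) := by
          rw [mem_vanishing_zero]
          simp [coeff_zero_X]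
        have : (X i : MvPolynomial (Fin n) K) ^ b * monomial f 1 ∈
            vanishingIdeal (0 : Fin n → K) ^ b * vanishingIdeal (0 : Fin n → K) ^ (dsum f) :=
          Ideal.mul_mem_mul (Ideal.pow_mem_pow hX b) ih
        rw [← pow_add] at this
        rw [he, dsum_add, dsum_single]
        exact this
    intro h
    rw [MvPolynomial.as_sum f]
    refine Ideal.sum_mem _ ?_
    intro d hd
    have : (monomial d (coeff d f)) = C (coeff d f) * monomial d 1 := by
      rw [C_mul_monomial, mul_one]
    rw [this]
    exact Ideal.mul_mem_left _ _ (Ideal.pow_le_pow_right (h d hd) (mono d))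

lemma monomial_mul_mem_iff (d0 : Fin n →₀ ℕ) (g : MvPolynomial (Fin n) K) (k : ℕ) :
    (monomial d0 (1 : K)) * g ∈ vanishingIdeal (0 : Fin n → K) ^ (dsum d0 + k) ↔
      g ∈ vanishingIdeal (0 : Fin n → K) ^ k := by
  constructor
  · intro h
    rw [mem_pow_iff] at h ⊢
    intro d hd
    have hc : coeff (d0 + d) ((monomial d0 (1 : K)) * g) = coeff d g := by
      rw [coeff_monomial_mul, one_mul]
    have hmem : d0 + d ∈ ((monomial d0 (1 : K)) * g).support := by
      rw [MvPolynomial.mem_support_iff, hc]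
      exact MvPolynomial.mem_support_iff.mp hd
    have := h _ hmem
    rw [dsum_add] at this
    omega
  · intro h
    rw [pow_add]
    refine Ideal.mul_mem_mul ?_ h
    rw [mem_pow_iff]
    intro d hd
    have := MvPolynomial.support_monomial_subset hd
    simp only [Finset.mem_singleton] at this
    subst this
    exact le_refl _

lemma span_monomial_mul_le_iff (d0 : Fin n →₀ ℕ) (J : Ideal (MvPolynomial (Fin n) K)) (k : ℕ) :
    Ideal.span {monomial d0 (1 : K)} * J ≤ vanishingIdeal (0 : Fin n → K) ^ (dsum d0 + k) ↔
      J ≤ vanishingIdeal (0 : Fin n → K) ^ k := by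
  constructor
  · intro h g hg
    rw [← monomial_mul_mem_iff d0]
    exact h (Ideal.mul_mem_mul (Ideal.mem_span_singleton_self _) hg)
  · intro h
    rw [Ideal.mul_le]
    intro r hr g hg
    obtain ⟨c, rfl⟩ := Ideal.mem_span_singleton'.mp hr
    have : c * monomial d0 (1 : K) * g = monomial d0 (1 : K) * (c * g) := by ring
    rw [this, monomial_mul_mem_iff]
    exact h (J.mul_mem_left c hg)

lemma span_monomial_mem_pow (d0 : Fin n →₀ ℕ) :
    Ideal.span {monomial d0 (1 : K)} ≤ vanishingIdeal (0 : Fin n → K) ^ (dsum d0) := by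
  rw [Ideal.span_le, Set.singleton_subset_iff]
  have := (monomial_mul_mem_iff (K := K) d0 1 0).mpr (by simp)
  simpa using this

/-- The key computation at the origin. -/
lemma ord_zero_mul (d0 : Fin n →₀ ℕ) (J : Ideal (MvPolynomial (Fin n) K)) (hJ : J ≠ ⊥) :
    ordIdeal (0 : Fin n → K) (Ideal.span {monomial d0 (1 : K)} * J) =
      dsum d0 + ordIdeal (0 : Fin n → K) J := by
  classical
  set m0 := vanishingIdeal (0 : Fin n → K)
  set SJ : Set ℕ := {m : ℕ | J ≤ m0 ^ m} with hSJ
  set SI : Set ℕ := {m : ℕ | Ideal.span {monomial d0 (1 : K)} * J ≤ m0 ^ m} with hSI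
  obtain ⟨g, hgJ, hg0⟩ := Submodule.ne_bot_iff J |>.mp hJ
  obtain ⟨d, hd⟩ := Finset.nonempty_iff_ne_empty.mpr
    (fun h => hg0 (by rwa [← MvPolynomial.support_eq_empty]))
  have hSJne : SJ.Nonempty := ⟨0, by simp [hSJ]⟩
  have hSJbdd : BddAbove SJ := by
    refine ⟨dsum d, ?_⟩
    intro k hk
    exact mem_pow_iff.mp (hk hgJ) d hd
  have hkJ : sSup SJ ∈ SJ := Nat.sSup_mem hSJne hSJbdd
  have hbound : ∀ t ∈ SI, t ≤ dsum d0 + sSup SJ := by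
    intro t ht
    rcases le_or_gt t (dsum d0) with h | h
    · omega
    · have : t = dsum d0 + (t - dsum d0) := by omega
      rw [this] at ht
      have : t - dsum d0 ∈ SJ := (span_monomial_mul_le_iff d0 J _).mp ht
      have := le_csSup hSJbdd this
      omega
  have hmem : dsum d0 + sSup SJ ∈ SI :=
    (span_monomial_mul_le_iff d0 J _).mpr hkJ
  have hSIbdd : BddAbove SI := ⟨dsum d0 + sSup SJ, hbound⟩
  have hSIne : SI.Nonempty := ⟨0, by simp [hSI]⟩
  refine le_antisymm (csSup_le hSIne hbound) (le_csSup hSIbdd hmem)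

end Aux

section Translate

open MvPolynomial

variable {K : Type*} [Field K] {n : ℕ}

/-- The translation automorphism `X i ↦ X i + p i`. -/
noncomputable def shiftEquiv (p : Fin n → K) :
    MvPolynomial (Fin n) K ≃ₐ[K] MvPolynomial (Fin n) K :=
  AlgEquiv.ofAlgHom (aeval fun i => X i + C (p i)) (aeval fun i => X i - C (p i))
    (by apply MvPolynomial.algHom_ext; intro i; simp [aeval_X])
    (by apply MvPolynomial.algHom_ext; intro i; simp [aeval_X])

/-- The translation as a ring hom. -/
noncomputable def shiftRingHom (p : Fin n → K) :
    MvPolynomial (Fin n) K →+* MvPolynomial (Fin n) K :=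
  ((shiftEquiv p : MvPolynomial (Fin n) K ≃+* MvPolynomial (Fin n) K) :
    MvPolynomial (Fin n) K →+* MvPolynomial (Fin n) K)

lemma shiftRingHom_apply (p : Fin n → K) (f : MvPolynomial (Fin n) K) :
    shiftRingHom p f = (aeval fun i => X i + C (p i)) f := rfl

lemma shiftRingHom_X (p : Fin n → K) (i : Fin n) :
    shiftRingHom p (X i) = X i + C (p i) := by
  rw [shiftRingHom_apply, aeval_X]

lemma shiftRingHom_surj (p : Fin n → K) : Function.Surjective (shiftRingHom p) :=
  (shiftEquiv p).surjective

lemma shiftRingHom_inj (p : Fin n → K) : Function.Injective (shiftRingHom p) :=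
  (shiftEquiv p).injective

lemma eval_zero_comp_shift (p : Fin n → K) (f : MvPolynomial (Fin n) K) :
    eval (0 : Fin n → K) (shiftRingHom p f) = eval p f := by
  have hcomp : (aeval (R := K) (0 : Fin n → K)).comp (aeval fun i => X i + C (p i)) =
      aeval (R := K) p := by
    apply MvPolynomial.algHom_ext
    intro i
    simp
  calc eval (0 : Fin n → K) (shiftRingHom p f)
      = aeval (R := K) (0 : Fin n → K) ((aeval fun i => X i + C (p i)) f) := rfl
    _ = ((aeval (R := K) (0 : Fin n → K)).comp (aeval fun i => X i + C (p i))) f := rfl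
    _ = aeval (R := K) p f := by rw [hcomp]
    _ = eval p f := rfl

lemma vanishing_comap (p : Fin n → K) :
    vanishingIdeal p =
      Ideal.comap (shiftRingHom p) (vanishingIdeal (0 : Fin n → K)) := by
  ext f
  simp only [_root_.vanishingIdeal, Ideal.mem_comap, RingHom.mem_ker]
  rw [← eval_zero_comp_shift p f]

lemma comap_shift_pow (p : Fin n → K) (t : ℕ) :
    Ideal.comap (shiftRingHom p) (vanishingIdeal (0 : Fin n → K) ^ t) =
      vanishingIdeal p ^ t := by
  have hker : RingHom.ker (shiftRingHom p) = ⊥ :=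
    RingHom.ker_eq_bot_iff_eq_zero _ |>.mpr
      (fun x hx => shiftRingHom_inj p (by simpa using hx))
  have h1 : Ideal.map (shiftRingHom p) (vanishingIdeal p) =
      vanishingIdeal (0 : Fin n → K) := by
    rw [vanishing_comap p]
    exact Ideal.map_comap_of_surjective _ (shiftRingHom_surj p) _
  have h2 : Ideal.comap (shiftRingHom p)
      (Ideal.map (shiftRingHom p) (vanishingIdeal p ^ t)) = vanishingIdeal p ^ t := by
    rw [Ideal.comap_map_of_surjective _ (shiftRingHom_surj p)]
    have : Ideal.comap (shiftRingHom p) ⊥ = ⊥ := by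
      rw [← RingHom.ker_eq_comap_bot, hker]
    rw [this, sup_bot_eq]
  rw [← h2, Ideal.map_pow, h1]

lemma ord_translate (p : Fin n → K) (I : Ideal (MvPolynomial (Fin n) K)) :
    ordIdeal p I = ordIdeal (0 : Fin n → K) (Ideal.map (shiftRingHom p) I) := by
  unfold ordIdeal
  congr 1
  ext t
  simp only [Set.mem_setOf_eq]
  rw [Ideal.map_le_iff_le_comap, comap_shift_pow]

end Translate

/-- For distinct indices `i₁ < … < i_s`, exponents `e₁,…,e_s`, a
nonzero ideal `J` and `I = ⟨x_{i₁}⟩^{e₁}·…·⟨x_{i_s}⟩^{e_s}·J`, every point `p` with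
`p_{i₁} = … = p_{i_s} = 0` satisfies `ord_p(I) = e₁+…+e_s + ord_p(J)`.  In particular,
if `ord_p(J) ≤ o` for all such `p` and `e₁+…+e_s+o < b`, then no such point lies in the
singular locus of `(I,b)`. -/
theorem stmt_8 {K : Type*} [Field K] {n s : ℕ} (ι : Fin s → Fin n) (hι : StrictMono ι)
    (e : Fin s → ℕ) (J : Ideal (MvPolynomial (Fin n) K)) (hJ : J ≠ ⊥) :
    (∀ p : Fin n → K, (∀ j, p (ι j) = 0) →
      ordIdeal p ((∏ j, Ideal.span {MvPolynomial.X (ι j)} ^ e j) * J) =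
        (∑ j, e j) + ordIdeal p J) ∧
    (∀ o b : ℕ,
      (∀ p : Fin n → K, (∀ j, p (ι j) = 0) → ordIdeal p J ≤ o) →
      (∑ j, e j) + o < b →
      ∀ p : Fin n → K, (∀ j, p (ι j) = 0) →
        ¬ b ≤ ordIdeal p ((∏ j, Ideal.span {MvPolynomial.X (ι j)} ^ e j) * J)) := by
  classical
  open MvPolynomial in
  have mono_prod : ∀ (t : Finset (Fin s)) (c : Fin s → (Fin n →₀ ℕ)),
      ∏ j ∈ t, (monomial (c j) (1 : K)) = monomial (∑ j ∈ t, c j) 1 := by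
    intro t c
    induction t using Finset.induction with
    | empty => simp
    | insert x t hx ih =>
      rw [Finset.prod_insert hx, Finset.sum_insert hx, ih, monomial_mul, one_mul]
  set d0 : Fin n →₀ ℕ := ∑ j, Finsupp.single (ι j) (e j) with hd0
  have hM : (∏ j, (MvPolynomial.X (ι j) : MvPolynomial (Fin n) K) ^ e j) =
      MvPolynomial.monomial d0 1 := by
    rw [hd0, ← mono_prod]
    exact Finset.prod_congr rfl fun j _ => MvPolynomial.X_pow_eq_monomial
  have hP : (∏ j, Ideal.span {(MvPolynomial.X (ι j) : MvPolynomial (Fin n) K)} ^ e j) =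
      Ideal.span {MvPolynomial.monomial d0 (1 : K)} := by
    rw [← hM]
    rw [Finset.prod_congr rfl fun j _ => Ideal.span_singleton_pow _ _]
    exact Ideal.prod_span_singleton _ _
  have hdeg : dsum d0 = ∑ j, e j := by
    rw [hd0]
    classical
    induction (Finset.univ : Finset (Fin s)) using Finset.induction with
    | empty => simp [dsum]
    | insert x t hx ih =>
      rw [Finset.sum_insert hx, Finset.sum_insert hx, dsum_add, dsum_single, ih]
  have main : ∀ p : Fin n → K, (∀ j, p (ι j) = 0) →
      ordIdeal p ((∏ j, Ideal.span {MvPolynomial.X (ι j)} ^ e j) * J) =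
        (∑ j, e j) + ordIdeal p J := by
    intro p hp
    set ψr : MvPolynomial (Fin n) K →+* MvPolynomial (Fin n) K := shiftRingHom p with hψr
    have hinj : Function.Injective ψr := shiftRingHom_inj p
    have hJ' : Ideal.map ψr J ≠ ⊥ := fun h =>
      hJ ((Ideal.map_eq_bot_iff_of_injective hinj).mp h)
    have hψM : ψr (MvPolynomial.monomial d0 (1 : K)) = MvPolynomial.monomial d0 1 := by
      rw [← hM, map_prod]
      refine Finset.prod_congr rfl fun j _ => ?_
      rw [map_pow]
      rw [hψr, shiftRingHom_X, hp j, map_zero, add_zero]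
    have hmap : Ideal.map ψr ((∏ j, Ideal.span {MvPolynomial.X (ι j)} ^ e j) * J) =
        Ideal.span {MvPolynomial.monomial d0 (1 : K)} * Ideal.map ψr J := by
      rw [hP, Ideal.map_mul, Ideal.map_span, Set.image_singleton, hψM]
    rw [ord_translate p, hmap, ord_zero_mul d0 _ hJ', hdeg, ord_translate p J]
  refine ⟨main, ?_⟩
  intro o b ho hob p hp
  rw [main p hp]
  have := ho p hp
  omega
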